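/- Let K ≥ 8. Then the supremum of 2K g₁ + K g₃ over all (g₁,g₂,g₃) ∈ ℝ³ such that the (1+2K)×(1+2K) matrix G(g₁,g₂,g₃) = [[1, g₁𝟙_Kᵀ, g₁𝟙_Kᵀ],[g₁𝟙_K, I_K + g₂(J_K − I_K), g₃ I_K],[g₁𝟙_K, g₃ I_K, I_K + g₂(J_K − I_K)]] is positive semidefinite equals K²/(K−2) + (K−2)/2. (Hence the level-1 NPA value of the no-cloning game equals 5/8 + 1/(2(K−2)) − 1/(4K) for K > 7, which tends to 5/8 as K → ∞.) -/

import Mathlib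

open Matrix

/-- The `K × K` all-ones matrix. -/
def allOnes (K : ℕ) : Matrix (Fin K) (Fin K) ℝ := Matrix.of fun _ _ => 1

/-- The symmetry-reduced level-1 NPA Gram matrix
`G(g₁,g₂,g₃) = [[1, g₁𝟙ᵀ, g₁𝟙ᵀ],[g₁𝟙, I + g₂(J−I), g₃I],[g₁𝟙, g₃I, I + g₂(J−I)]]`. -/
def npaGram (K : ℕ) (g₁ g₂ g₃ : ℝ) :
    Matrix (Unit ⊕ (Fin K ⊕ Fin K)) (Unit ⊕ (Fin K ⊕ Fin K)) ℝ :=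
  Matrix.fromBlocks
    (Matrix.of fun _ _ => 1)
    (Matrix.of fun _ _ => g₁)
    (Matrix.of fun _ _ => g₁)
    (Matrix.fromBlocks
      (1 + g₂ • (allOnes K - 1)) (g₃ • (1 : Matrix (Fin K) (Fin K) ℝ))
      (g₃ • (1 : Matrix (Fin K) (Fin K) ℝ)) (1 + g₂ • (allOnes K - 1)))

lemma const_mulVec {m n : Type*} [Fintype n] (c : ℝ) (y : n → ℝ) :
    (Matrix.of fun (_ : m) (_ : n) => c) *ᵥ y = fun _ => c * ∑ j, y j := by
  ext i; simp [Matrix.mulVec, dotProduct, Finset.mul_sum]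

lemma allOnes_mulVec (K : ℕ) (y : Fin K → ℝ) :
    allOnes K *ᵥ y = fun _ => ∑ j, y j := by
  ext i; simp [allOnes, Matrix.mulVec, dotProduct]

lemma quad (K : ℕ) (g₁ g₂ g₃ t : ℝ) (y z : Fin K → ℝ) :
    (Sum.elim (fun _ => t) (Sum.elim y z)) ⬝ᵥ
      (npaGram K g₁ g₂ g₃ *ᵥ Sum.elim (fun _ => t) (Sum.elim y z))
    = t^2 + 2*g₁*t*((∑ i, y i) + (∑ i, z i)) + (∑ i, (y i)^2) + (∑ i, (z i)^2)
      + g₂*((∑ i, y i)^2 - (∑ i, (y i)^2) + ((∑ i, z i)^2 - (∑ i, (z i)^2)))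
      + 2*g₃*(∑ i, y i * z i) := by
  simp only [npaGram, fromBlocks_mulVec, Sum.elim_comp_inl, Sum.elim_comp_inr,
    sumElim_dotProduct_sumElim, const_mulVec, allOnes_mulVec,
    add_mulVec, one_mulVec, smul_mulVec, sub_mulVec]
  simp only [dotProduct, Pi.add_apply, Pi.smul_apply, Pi.sub_apply, smul_eq_mul,
    Finset.univ_unique, Finset.sum_const, Finset.card_singleton, one_smul,
    Fintype.sum_sum_type, Sum.elim_inl, Sum.elim_inr]
  simp only [Finset.sum_add_distrib, Finset.mul_sum, Finset.sum_sub_distrib,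
    Finset.sum_const, Finset.card_univ, Fintype.card_fin, nsmul_eq_mul]
  have h1 : ∀ x, y x * (g₁ * t + (y x + g₂ * ((∑ j, y j) - y x) + g₃ * z x))
      = g₁*t*(y x) + (y x)^2 + g₂*((∑ j, y j)*(y x)) - g₂*(y x)^2 + g₃*(y x * z x) :=
    fun x => by ring
  have h2 : ∀ x, z x * (g₁ * t + (g₃ * y x + (z x + g₂ * ((∑ j, z j) - z x))))
      = g₁*t*(z x) + (z x)^2 + g₂*((∑ j, z j)*(z x)) - g₂*(z x)^2 + g₃*(y x * z x) :=
    fun x => by ring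
  simp only [h1, h2, Finset.sum_add_distrib, Finset.sum_sub_distrib, ← Finset.mul_sum]
  ring

lemma npaGram_herm (K : ℕ) (g₁ g₂ g₃ : ℝ) : (npaGram K g₁ g₂ g₃).IsHermitian := by
  unfold Matrix.IsHermitian
  ext i j
  rcases i with i | i | i <;> rcases j with j | j | j <;>
    simp [npaGram, Matrix.conjTranspose_apply, allOnes, Matrix.one_apply, eq_comm]

lemma vec_decomp {K : ℕ} (x : Unit ⊕ (Fin K ⊕ Fin K) → ℝ) :
    x = Sum.elim (fun _ => x (Sum.inl ()))
      (Sum.elim (fun i => x (Sum.inr (Sum.inl i))) (fun i => x (Sum.inr (Sum.inr i)))) := by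
  funext j
  rcases j with j | j | j
  · cases j; rfl
  · rfl
  · rfl

lemma hmem_lem (K : ℕ) (hK : 8 ≤ K) (k : ℝ) (hk : k = K) :
    ∃ g₁ g₂ g₃ : ℝ, (npaGram K g₁ g₂ g₃).PosSemidef ∧
      k ^ 2 / (k - 2) + (k - 2) / 2 = 2 * k * g₁ + k * g₃ := by
  have hk8 : (8:ℝ) ≤ k := by rw [hk]; exact_mod_cast hK
  have hkpos : (0:ℝ) < k := by linarith
  have hk2 : (0:ℝ) < k - 2 := by linarith
  refine ⟨(k-2)/(2*k), 1 - (k/(k-2) - (k-2)/(2*k)), k/(k-2) - (k-2)/(2*k),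
    PosSemidef.of_dotProduct_mulVec_nonneg (npaGram_herm K _ _ _) ?_, ?_⟩
  · have ha₃pos : 0 ≤ k/(k-2) - (k-2)/(2*k) := by
      have h1 : (k-2)/(2*k) ≤ 1 := by rw [div_le_one (by linarith)]; linarith
      have h2 : (1:ℝ) ≤ k/(k-2) := by rw [le_div_iff₀ hk2]; linarith
      linarith
    have ha₂pos : 0 ≤ 1 - (k/(k-2) - (k-2)/(2*k)) := by
      have : k / (k-2) - (k-2)/(2*k) ≤ 1 := by
        rw [div_sub_div _ _ (ne_of_gt hk2) (by positivity), div_le_one (by positivity)]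
        nlinarith
      linarith
    intro x
    rw [star_trivial, vec_decomp x, quad]
    set t := x (Sum.inl ())
    set y : Fin K → ℝ := fun i => x (Sum.inr (Sum.inl i))
    set z : Fin K → ℝ := fun i => x (Sum.inr (Sum.inr i))
    set Sy := ∑ i, y i with hSy
    set Sz := ∑ i, z i with hSz
    set A := ∑ i, (y i)^2 with hA
    set B := ∑ i, (z i)^2 with hB
    set C := ∑ i, y i * z i with hC
    have hCS : (Sy + Sz)^2 ≤ k * (A + 2*C + B) := by
      have h := sq_sum_le_card_mul_sum_sq (s := (Finset.univ : Finset (Fin K)))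
        (f := fun i => y i + z i)
      simp only [Finset.card_univ, Fintype.card_fin] at h
      calc (Sy + Sz)^2 = (∑ i, (y i + z i))^2 := by
            rw [hSy, hSz, ← Finset.sum_add_distrib]
        _ ≤ (K:ℝ) * ∑ i, (y i + z i)^2 := h
        _ = k * (A + 2*C + B) := by
            rw [hk, hA, hB, hC]
            congr 1
            simp only [add_sq, Finset.sum_add_distrib, Finset.mul_sum, mul_assoc]
    have key : t^2 + 2*((k-2)/(2*k))*t*(Sy + Sz) + A + B
          + (1 - (k/(k-2) - (k-2)/(2*k)))*(Sy^2 - A + (Sz^2 - B))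
          + 2*(k/(k-2) - (k-2)/(2*k))*C
        = (t + ((k-2)/(2*k))*(Sy+Sz))^2
          + ((k/(k-2) - (k-2)/(2*k))/k)*(k*(A + 2*C + B) - (Sy+Sz)^2)
          + ((1 - (k/(k-2) - (k-2)/(2*k)))/2)*(Sy - Sz)^2 := by
      field_simp
      ring
    rw [key]
    have h1 : 0 ≤ ((k/(k-2) - (k-2)/(2*k))/k)*(k*(A + 2*C + B) - (Sy+Sz)^2) :=
      mul_nonneg (by positivity) (by linarith)
    have h2 : 0 ≤ ((1 - (k/(k-2) - (k-2)/(2*k)))/2)*(Sy - Sz)^2 :=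
      mul_nonneg (by linarith) (sq_nonneg _)
    nlinarith [sq_nonneg (t + ((k-2)/(2*k))*(Sy+Sz))]
  · field_simp
    ring
lemma hub_lem (K : ℕ) (hK : 8 ≤ K) (k : ℝ) (hk : k = K)
    (g₁ g₂ g₃ : ℝ) (hpsd : (npaGram K g₁ g₂ g₃).PosSemidef) :
    2 * k * g₁ + k * g₃ ≤ k ^ 2 / (k - 2) + (k - 2) / 2 := by
  have hk8 : (8:ℝ) ≤ k := by rw [hk]; exact_mod_cast hK
  have hkpos : (0:ℝ) < k := by linarith
  have hk2 : (0:ℝ) < k - 2 := by linarith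
  -- constraint 1 : 2 k g₁² ≤ 1 + (k-1) g₂ + g₃
  have hc1 : 2*k*g₁^2 ≤ 1 + (k-1)*g₂ + g₃ := by
    have h := hpsd.dotProduct_mulVec_nonneg (Sum.elim (fun _ => -2*k*g₁)
      (Sum.elim (fun (_ : Fin K) => (1:ℝ)) (fun _ => (1:ℝ))))
    rw [star_trivial, quad] at h
    simp only [Finset.sum_const, Finset.card_univ, Fintype.card_fin, nsmul_eq_mul,
      mul_one, one_pow] at h
    rw [← hk] at h
    nlinarith [h, hkpos]
  -- constraint 2 : g₂ + g₃ ≤ 1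
  have hc2 : g₂ + g₃ ≤ 1 := by
    haveI : NeZero K := ⟨by omega⟩
    have h01 : (0 : Fin K) ≠ 1 := by
      have hv : (1 : Fin K).val = 1 := by rw [Fin.val_one']; exact Nat.mod_eq_of_lt (by omega)
      intro h
      have := congrArg Fin.val h
      rw [Fin.val_zero, hv] at this
      exact one_ne_zero this.symm
    set w : Fin K → ℝ := fun j => (if j = 0 then 1 else 0) - (if j = 1 then 1 else 0) with hw
    have h := hpsd.dotProduct_mulVec_nonneg (Sum.elim (fun _ => 0) (Sum.elim w (-w)))
    rw [star_trivial, quad] at h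
    have hsum : ∑ j, w j = 0 := by
      simp [hw, Finset.sum_sub_distrib]
    have hsq : ∀ j, (w j)^2 = (if j = 0 then 1 else 0) + (if j = 1 then 1 else 0) := by
      intro j
      by_cases h1 : j = 0
      · subst h1; rw [if_pos rfl, if_neg h01, hw]; simp [h01]
      · by_cases h2 : j = 1
        · subst h2; rw [if_neg h1, if_pos rfl, hw]; simp [h1]
        · rw [if_neg h1, if_neg h2, hw]; simp [h1, h2]
    have hsqsum : ∑ j, (w j)^2 = 2 := by
      simp only [hsq, Finset.sum_add_distrib]
      norm_num
    have hneg : ∀ j, (-w) j = -(w j) := fun j => rfl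
    simp only [hneg] at h
    rw [show (∑ j, -(w j)) = -∑ j, w j from by rw [Finset.sum_neg_distrib]] at h
    rw [show (∑ j, (-(w j))^2) = ∑ j, (w j)^2 from by simp [neg_pow]] at h
    rw [show (∑ j, w j * -(w j)) = -∑ j, (w j)^2 from by
      simp [Finset.sum_neg_distrib, sq, Finset.sum_neg_distrib]] at h
    rw [hsum, hsqsum] at h
    norm_num at h
    linarith
  -- combine
  have e1 : 2*k*(k-1)*(g₂+g₃) ≤ 2*k*(k-1) := by
    have h := mul_le_mul_of_nonneg_left hc2 (show (0:ℝ) ≤ 2*k*(k-1) by nlinarith)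
    linarith [h]
  have e2 := mul_le_mul_of_nonneg_left hc1 (show (0:ℝ) ≤ 2*k by linarith)
  rw [show k^2/(k-2) + (k-2)/2 = (2*k^2 + (k-2)^2)/(2*(k-2)) from by field_simp,
    le_div_iff₀ (by linarith)]
  nlinarith [e1, e2, sq_nonneg (2*k*g₁ - (k-2))]

/-- **Statement 17.** For `K ≥ 8`, the supremum of `2K g₁ + K g₃` over all
`(g₁,g₂,g₃) ∈ ℝ³` with `G(g₁,g₂,g₃)` positive semidefinite equals `K²/(K−2) + (K−2)/2`;
hence the level-1 NPA value of the Clifford no-cloning game equals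
`5/8 + 1/(2(K−2)) − 1/(4K)` for `K > 7`, tending to `5/8` as `K → ∞`. -/
theorem stmt18 (K : ℕ) (hK : 8 ≤ K) :
    sSup {x : ℝ | ∃ g₁ g₂ g₃ : ℝ, (npaGram K g₁ g₂ g₃).PosSemidef ∧
        x = 2 * K * g₁ + K * g₃}
      = K ^ 2 / (K - 2) + (K - 2) / 2 := by
  refine IsGreatest.csSup_eq ⟨?_, ?_⟩
  · obtain ⟨g₁, g₂, g₃, h, hv⟩ := hmem_lem K hK (K : ℝ) rfl
    exact ⟨g₁, g₂, g₃, h, hv⟩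
  · rintro x ⟨g₁, g₂, g₃, hpsd, rfl⟩
    exact hub_lem K hK (K : ℝ) rfl g₁ g₂ g₃ hpsd
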